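/- Let G be an edge-colored complete graph on n vertices with Δ^mon(G) ≤ n − 2k. If there is a partition of V(G) into two nonempty sets V1, V2 such that only one color appears on all edges between V1 and V2 (a monochromatic edge-cut), then G contains k pairwise vertex-disjoint properly edge-colored cycles of length 4. -/

import Mathlib

/-- Number of edges of color `a` incident with `v` (monochromatic degree). -/
noncomputable def monDeg {V : Type*} (col : V → V → ℕ) (v : V) (a : ℕ) : ℕ :=
  {u | u ≠ v ∧ col v u = a}.ncard

/-- Color degree of a vertex: number of distinct colors on incident edges. -/
noncomputable def colorDeg {V : Type*} (col : V → V → ℕ) (v : V) : ℕ :=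
  (col v '' {u | u ≠ v}).ncard

/-- Maximum monochromatic degree Δ^mon. -/
noncomputable def maxMonDeg {V : Type*} (col : V → V → ℕ) : ℕ :=
  sSup {d | ∃ v a, d = monDeg col v a}

/-- Number of colors appearing on edges. -/
noncomputable def numColors {V : Type*} (col : V → V → ℕ) : ℕ :=
  {a | ∃ u v : V, u ≠ v ∧ col u v = a}.ncard

/-- A properly edge-colored (PC) cycle of length `m`, given by an injective
map `c : ZMod m → V`; adjacent edges get distinct colors. -/
def IsPCCycle {V : Type*} (col : V → V → ℕ) (m : ℕ) (c : ZMod m → V) : Prop :=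
  3 ≤ m ∧ Function.Injective c ∧
    ∀ i : ZMod m, col (c i) (c (i + 1)) ≠ col (c (i + 1)) (c (i + 2))

/-- `k` pairwise vertex-disjoint PC cycles. -/
def HasKDisjointPCCycles {V : Type*} (col : V → V → ℕ) (k : ℕ) : Prop :=
  ∃ (m : Fin k → ℕ) (c : ∀ j, ZMod (m j) → V),
    (∀ j, IsPCCycle col (m j) (c j)) ∧
    ∀ j j', j ≠ j' → Disjoint (Set.range (c j)) (Set.range (c j'))

/-- `k` pairwise vertex-disjoint PC cycles, each of length at most 4. -/
def HasKDisjointShortPCCycles {V : Type*} (col : V → V → ℕ) (k : ℕ) : Prop :=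
  ∃ (m : Fin k → ℕ) (c : ∀ j, ZMod (m j) → V),
    (∀ j, IsPCCycle col (m j) (c j) ∧ m j ≤ 4) ∧
    ∀ j j', j ≠ j' → Disjoint (Set.range (c j)) (Set.range (c j'))

/-- A directed cycle of length `m` in a digraph with arc relation `A`. -/
def IsDicycle {V : Type*} (A : V → V → Prop) (m : ℕ) (c : ZMod m → V) : Prop :=
  2 ≤ m ∧ Function.Injective c ∧ ∀ i : ZMod m, A (c i) (c (i + 1))

/-- `k` pairwise vertex-disjoint directed cycles. -/
def HasKDisjointDicycles {V : Type*} (A : V → V → Prop) (k : ℕ) : Prop :=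
  ∃ (m : Fin k → ℕ) (c : ∀ j, ZMod (m j) → V),
    (∀ j, IsDicycle A (m j) (c j)) ∧
    ∀ j j', j ≠ j' → Disjoint (Set.range (c j)) (Set.range (c j'))

/-- A monochromatic edge-cut: a bipartition with all crossing edges one color. -/
def HasMonochromaticCut {V : Type*} (col : V → V → ℕ) : Prop :=
  ∃ S : Set V, S.Nonempty ∧ Sᶜ.Nonempty ∧ ∃ a, ∀ x ∈ S, ∀ y ∈ Sᶜ, col x y = a

/-- A rainbow triangle: three vertices with pairwise distinct edge colors. -/
def HasRainbowTriangle {V : Type*} (col : V → V → ℕ) : Prop :=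
  ∃ x y z : V, x ≠ y ∧ y ≠ z ∧ x ≠ z ∧
    col x y ≠ col y z ∧ col y z ≠ col x z ∧ col x y ≠ col x z

/-- A Gallai partition of an edge-colored complete graph. -/
def HasGallaiPartition {V : Type*} (col : V → V → ℕ) : Prop :=
  ∃ (q : ℕ) (U : Fin q → Set V), 2 ≤ q ∧ (∀ i, (U i).Nonempty) ∧
    (∀ i j, i ≠ j → Disjoint (U i) (U j)) ∧ (⋃ i, U i) = Set.univ ∧
    (∀ i j, i ≠ j → ∃ a, ∀ x ∈ U i, ∀ y ∈ U j, col x y = a) ∧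
    ∃ a b, ∀ i j, i ≠ j → ∀ x ∈ U i, ∀ y ∈ U j, col x y = a ∨ col x y = b

/-- Degree lemma: each vertex of a side of the cut has ≥ 2k-1 non-`a` neighbors
inside its side. -/
lemma side_deg {n k : ℕ} (col : Fin n → Fin n → ℕ)
    (hmon : ∀ v a, monDeg col v a + 2 * k ≤ n)
    (S : Set (Fin n)) (a : ℕ) (hS : ∀ x ∈ S, ∀ y ∈ Sᶜ, col x y = a)
    (v : Fin n) (hv : v ∈ S) :
    2 * k ≤ 1 + {u | u ∈ S ∧ u ≠ v ∧ col v u ≠ a}.ncard := by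
  set A : Set (Fin n) := {u | u ≠ v ∧ col v u = a} with hA
  set B : Set (Fin n) := {u | u ∈ S ∧ u ≠ v ∧ col v u = a} with hB
  set C : Set (Fin n) := {u | u ∈ S ∧ u ≠ v ∧ col v u ≠ a} with hC
  have hm : A.ncard + 2 * k ≤ n := by
    have := hmon v a
    simpa [monDeg, hA] using this
  have hsub : Sᶜ ∪ B ⊆ A := by
    rintro u (hu | hu)
    · refine ⟨fun h => hu (h ▸ hv), hS v hv u hu⟩
    · exact ⟨hu.2.1, hu.2.2⟩
  have hdisj : Disjoint Sᶜ B := by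
    rw [Set.disjoint_left]; intro u hu hu'; exact hu hu'.1
  have h1 : Sᶜ.ncard + B.ncard ≤ A.ncard := by
    rw [← Set.ncard_union_eq hdisj (Set.toFinite _) (Set.toFinite _)]
    exact Set.ncard_le_ncard hsub (Set.toFinite _)
  have h3 : S.ncard + Sᶜ.ncard = n := by
    rw [Set.ncard_add_ncard_compl]; simp
  have hBC : B ∪ C = S \ {v} := by
    ext x
    simp only [hB, hC, Set.mem_union, Set.mem_setOf_eq, Set.mem_diff,
      Set.mem_singleton_iff]
    tauto
  have hdBC : Disjoint B C := by
    rw [Set.disjoint_left]; intro u hu hu'; exact hu'.2.2 hu.2.2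
  have h4 : B.ncard + C.ncard + 1 = S.ncard := by
    rw [← Set.ncard_union_eq hdBC (Set.toFinite _) (Set.toFinite _), hBC]
    exact Set.ncard_diff_singleton_add_one hv (Set.toFinite _)
  omega

/-- Greedy matching: if each vertex of `S` has at least `2k-1` non-`a`
neighbors in `S`, then there are `k` disjoint non-`a` edges in `S`. -/
lemma greedy {n : ℕ} (col : Fin n → Fin n → ℕ) (a : ℕ) :
    ∀ (k : ℕ) (S : Set (Fin n)),
    (∀ v ∈ S, 2 * k ≤ 1 + {u | u ∈ S ∧ u ≠ v ∧ col v u ≠ a}.ncard) →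
    (k ≠ 0 → S.Nonempty) →
    ∃ p q : Fin k → Fin n,
      (∀ j, p j ∈ S) ∧ (∀ j, q j ∈ S) ∧ (∀ j, col (p j) (q j) ≠ a) ∧
      (∀ j j', p j ≠ q j') ∧ Function.Injective p ∧ Function.Injective q := by
  intro k
  induction k with
  | zero =>
    intro S _ _
    exact ⟨Fin.elim0, Fin.elim0, fun j => j.elim0, fun j => j.elim0,
      fun j => j.elim0, fun j => j.elim0,
      Function.injective_of_subsingleton _,
      Function.injective_of_subsingleton _⟩
  | succ k ih =>
    intro S hdeg hne
    obtain ⟨v, hv⟩ := hne (by simp)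
    set N : Set (Fin n) := {u | u ∈ S ∧ u ≠ v ∧ col v u ≠ a} with hNdef
    have hN : 2 * (k + 1) ≤ 1 + N.ncard := hdeg v hv
    have hNne : N.Nonempty := by
      apply Set.nonempty_of_ncard_ne_zero; omega
    obtain ⟨u, hu⟩ := hNne
    have huS : u ∈ S := hu.1
    have huv : u ≠ v := hu.2.1
    have hcol : col v u ≠ a := hu.2.2
    set S' : Set (Fin n) := S \ {v, u} with hS'def
    have hvS' : v ∉ S' := by simp [hS'def]
    have huS' : u ∉ S' := by simp [hS'def]
    have hS'S : S' ⊆ S := Set.diff_subset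
    -- degree condition on S'
    have hdeg' : ∀ w ∈ S', 2 * k ≤ 1 + {x | x ∈ S' ∧ x ≠ w ∧ col w x ≠ a}.ncard := by
      intro w hw
      have h1 := hdeg w hw.1
      have Hset : {x | x ∈ S' ∧ x ≠ w ∧ col w x ≠ a}
          = {x | x ∈ S ∧ x ≠ w ∧ col w x ≠ a} \ {v, u} := by
        ext x
        simp only [hS'def, Set.mem_setOf_eq, Set.mem_diff, Set.mem_insert_iff,
          Set.mem_singleton_iff]
        tauto
      have h2 : {x | x ∈ S ∧ x ≠ w ∧ col w x ≠ a}.ncard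
          ≤ {x | x ∈ S' ∧ x ≠ w ∧ col w x ≠ a}.ncard + 2 := by
        have := Set.ncard_le_ncard_diff_add_ncard
          {x | x ∈ S ∧ x ≠ w ∧ col w x ≠ a} ({v, u} : Set (Fin n)) (Set.toFinite _)
        have hpair : ({v, u} : Set (Fin n)).ncard ≤ 2 := by
          have := Set.ncard_insert_le v ({u} : Set (Fin n))
          simpa using this
        rw [← Hset] at this
        omega
      omega
    -- nonemptiness of S'
    have hne' : k ≠ 0 → S'.Nonempty := by
      intro hk
      have hsub : N \ {u} ⊆ S' := by
        rintro x ⟨hx, hxu⟩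
        refine ⟨hx.1, ?_⟩
        simp only [Set.mem_insert_iff, Set.mem_singleton_iff] at hxu ⊢
        push_neg
        exact ⟨hx.2.1, hxu⟩
      have hcard : N.ncard ≤ (N \ {u}).ncard + 1 := by
        have := Set.ncard_le_ncard_diff_add_ncard N ({u} : Set (Fin n)) (Set.toFinite _)
        simpa using this
      have : (N \ {u}).Nonempty := by
        apply Set.nonempty_of_ncard_ne_zero; omega
      exact this.mono hsub
    obtain ⟨p, q, hpS, hqS, hpq, hpnq, hpinj, hqinj⟩ := ih S' hdeg' hne'
    refine ⟨Fin.cons v p, Fin.cons u q, ?_, ?_, ?_, ?_, ?_, ?_⟩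
    · intro j
      induction j using Fin.cases with
      | zero => simpa using hv
      | succ j => simpa using hS'S (hpS j)
    · intro j
      induction j using Fin.cases with
      | zero => simpa using huS
      | succ j => simpa using hS'S (hqS j)
    · intro j
      induction j using Fin.cases with
      | zero => simpa using hcol
      | succ j => simpa using hpq j
    · intro j j'
      induction j using Fin.cases with
      | zero =>
        induction j' using Fin.cases with
        | zero => simpa using Ne.symm huv
        | succ j' =>
          simp only [Fin.cons_zero, Fin.cons_succ]
          exact fun h => hvS' (by rw [h]; exact hqS j')
      | succ j =>
        induction j' using Fin.cases with
        | zero =>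
          simp only [Fin.cons_zero, Fin.cons_succ]
          exact fun h => huS' (by rw [← h]; exact hpS j)
        | succ j' => simpa using hpnq j j'
    · rw [Fin.cons_injective_iff]
      exact ⟨fun ⟨j, hj⟩ => hvS' (hj ▸ hpS j), hpinj⟩
    · rw [Fin.cons_injective_iff]
      exact ⟨fun ⟨j, hj⟩ => huS' (hj ▸ hqS j), hqinj⟩

/-- If Δ^mon(G) ≤ n − 2k and G has a monochromatic edge-cut, then G has
k disjoint PC cycles of length 4. -/
theorem stmt4 (n k : ℕ) (col : Fin n → Fin n → ℕ)
    (hsymm : ∀ u v, col u v = col v u)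
    (hmon : ∀ v a, monDeg col v a + 2 * k ≤ n)
    (hcut : HasMonochromaticCut col) :
    ∃ c : Fin k → ZMod 4 → Fin n,
      (∀ j, IsPCCycle col 4 (c j)) ∧
      ∀ j j', j ≠ j' → Disjoint (Set.range (c j)) (Set.range (c j')) := by
  obtain ⟨S, hSne, hScne, a, hS⟩ := hcut
  have hS' : ∀ x ∈ Sᶜ, ∀ y ∈ Sᶜᶜ, col x y = a := by
    intro x hx y hy
    rw [compl_compl] at hy
    rw [hsymm]
    exact hS y hy x hx
  obtain ⟨p, q, hpS, hqS, hpq, hpnq, hpinj, hqinj⟩ :=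
    greedy col a k S (fun v hv => side_deg col hmon S a hS v hv)
      (fun _ => hSne)
  obtain ⟨r, s, hrS, hsS, hrs, hrns, hrinj, hsinj⟩ :=
    greedy col a k Sᶜ (fun v hv => side_deg col hmon Sᶜ a hS' v hv)
      (fun _ => hScne)
  have cross : ∀ x y : Fin n, x ∈ S → y ∈ Sᶜ → x ≠ y :=
    fun x y hx hy h => hy (h ▸ hx)
  set c : Fin k → ZMod 4 → Fin n := fun j i => ![p j, q j, r j, s j] i with hc
  refine ⟨c, ?_, ?_⟩
  · intro j
    have d1 : p j ≠ q j := hpnq j j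
    have d2 : p j ≠ r j := cross _ _ (hpS j) (hrS j)
    have d3 : p j ≠ s j := cross _ _ (hpS j) (hsS j)
    have d4 : q j ≠ r j := cross _ _ (hqS j) (hrS j)
    have d5 : q j ≠ s j := cross _ _ (hqS j) (hsS j)
    have d6 : r j ≠ s j := hrns j j
    have d1' : q j ≠ p j := d1.symm
    have d2' : r j ≠ p j := d2.symm
    have d3' : s j ≠ p j := d3.symm
    have d4' : r j ≠ q j := d4.symm
    have d5' : s j ≠ q j := d5.symm
    have d6' : s j ≠ r j := d6.symm
    have e0 : col (p j) (q j) ≠ a := hpq j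
    have e1 : col (q j) (r j) = a := hS (q j) (hqS j) (r j) (hrS j)
    have e2 : col (r j) (s j) ≠ a := hrs j
    have e3 : col (s j) (p j) = a := by
      rw [hsymm]; exact hS (p j) (hpS j) (s j) (hsS j)
    refine ⟨by norm_num, ?_, ?_⟩
    · intro i i' h
      fin_cases i <;> fin_cases i' <;>
        first
          | rfl
          | exact absurd h d1
          | exact absurd h d2
          | exact absurd h d3
          | exact absurd h d4
          | exact absurd h d5
          | exact absurd h d6
          | exact absurd h d1'
          | exact absurd h d2'
          | exact absurd h d3'
          | exact absurd h d4'
          | exact absurd h d5'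
          | exact absurd h d6'
    · intro i
      fin_cases i
      · show col (p j) (q j) ≠ col (q j) (r j)
        exact fun h => e0 (h.trans e1)
      · show col (q j) (r j) ≠ col (r j) (s j)
        exact fun h => e2 (h.symm.trans e1)
      · show col (r j) (s j) ≠ col (s j) (p j)
        exact fun h => e2 (h.trans e3)
      · show col (s j) (p j) ≠ col (p j) (q j)
        exact fun h => e0 (h.symm.trans e3)
  · intro j j' hjj'
    rw [Set.disjoint_left]
    have hmem : ∀ (j₀ : Fin k) (y : Fin n), y ∈ Set.range (c j₀) →
        y = p j₀ ∨ y = q j₀ ∨ y = r j₀ ∨ y = s j₀ := by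
      rintro j₀ y ⟨i, rfl⟩
      fin_cases i <;> simp [c]
    intro x hx hx'
    rcases hmem j x hx with h1 | h1 | h1 | h1 <;>
      rcases hmem j' x hx' with h2 | h2 | h2 | h2 <;>
      (have h := h1.symm.trans h2) <;>
      first
        | exact hjj' (hpinj h)
        | exact hjj' (hqinj h)
        | exact hjj' (hrinj h)
        | exact hjj' (hsinj h)
        | exact hpnq j j' h
        | exact hpnq j' j h.symm
        | exact hrns j j' h
        | exact hrns j' j h.symm
        | exact cross _ _ (hpS j) (hrS j') h
        | exact cross _ _ (hpS j) (hsS j') h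
        | exact cross _ _ (hqS j) (hrS j') h
        | exact cross _ _ (hqS j) (hsS j') h
        | exact cross _ _ (hpS j') (hrS j) h.symm
        | exact cross _ _ (hpS j') (hsS j) h.symm
        | exact cross _ _ (hqS j') (hrS j) h.symm
        | exact cross _ _ (hqS j') (hsS j) h.symm
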